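/- arXiv:1511.02111 — 2 statements merged into one kernel-verified Lean document; each statement's English description precedes it below -/
import Mathlib

section
/- For all nonnegative integers i, j, n such that i, j and n all have the same parity, the number of diagonal-lattice walks of length n that start at (0,0), end at (i,j), and are confined to the quadrant Q equals (i+1)·(j+1) / ( (1 + (n+i)/2)·(1 + (n+j)/2) ) · binom(n, (n+i)/2) · binom(n, (n+j)/2), where binom(n,k) = 0 when k > n. -/
/-- Square-lattice steps. -/
def squareSteps : Set (ℤ × ℤ) := {(1,0), (-1,0), (0,1), (0,-1)}

/-- Diagonal-lattice steps. -/
def diagSteps : Set (ℤ × ℤ) := {(1,1), (1,-1), (-1,1), (-1,-1)}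

/-- The three-quadrant cone `C = {(i,j) : i ≥ 0 or j ≥ 0}`. -/
def coneC : Set (ℤ × ℤ) := {p | 0 ≤ p.1 ∨ 0 ≤ p.2}

/-- The quadrant `Q = {(i,j) : i ≥ 0 and j ≥ 0}`. -/
def quadQ : Set (ℤ × ℤ) := {p | 0 ≤ p.1 ∧ 0 ≤ p.2}

/-- Number of walks of length `n` with steps in `steps`, from `a` to `b`,
confined to `region`. -/
noncomputable def walkCount (steps region : Set (ℤ × ℤ)) (a b : ℤ × ℤ) (n : ℕ) : ℕ :=
  Nat.card {w : Fin (n+1) → ℤ × ℤ //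
    w 0 = a ∧ w (Fin.last n) = b ∧
    (∀ k : Fin n, w k.succ - w k.castSucc ∈ steps) ∧
    (∀ k, w k ∈ region)}


def D : ℕ → ℤ → ℕ
  | 0, i => if i = 0 then 1 else 0
  | n+1, i => if 0 ≤ i then D n (i-1) + D n (i+1) else 0

lemma D_neg (n : ℕ) (i : ℤ) (h : i < 0) : D n i = 0 := by
  cases n with
  | zero => simp [D]; omega
  | succ n => simp [D]; omega

lemma choose_anti (n m : ℕ) (h : n ≤ 2*m) : Nat.choose n (m+1) ≤ Nat.choose n m := by
  have h1 := Nat.choose_succ_right_eq n m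
  have h2 : n - m ≤ m + 1 := by omega
  have h3 : Nat.choose n (m+1) * (m+1) ≤ Nat.choose n m * (m+1) := by
    rw [h1]; exact Nat.mul_le_mul_left _ h2
  exact Nat.le_of_mul_le_mul_right h3 (by omega)

lemma D_closed : ∀ n : ℕ, ∀ i : ℕ, i % 2 = n % 2 →
    D n (i : ℤ) = Nat.choose n ((n+i)/2) - Nat.choose n ((n+i)/2 + 1) := by
  intro n
  induction n with
  | zero =>
    intro i hp
    rcases Nat.eq_zero_or_pos i with h | h
    · subst h; simp [D]
    · have hi0 : (i:ℤ) ≠ 0 := by omega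

      simp only [D, if_neg hi0]
      have : (0 + i)/2 ≠ 0 := by omega
      rw [Nat.choose_eq_zero_of_lt (by omega), Nat.choose_eq_zero_of_lt (by omega)]
  | succ n ih =>
    intro i hp
    rcases Nat.eq_zero_or_pos i with h | h
    · subst h
      have hn : n % 2 = 1 := by omega
      set m := (n+1)/2 with hm
      have hn2 : n = 2*m - 1 ∧ 1 ≤ m := by omega
      have hD : D (n+1) ((0:ℕ):ℤ) = D n (-1) + D n 1 := by norm_num [D]
      rw [hD, D_neg n (-1) (by norm_num)]
      have h1 : D n (1:ℤ) = Nat.choose n m - Nat.choose n (m + 1) := by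
        have := ih 1 (by omega)
        have h12 : (n+1)/2 = m := by omega
        rw [h12] at this; exact_mod_cast this
      have hsymm : Nat.choose n (m-1) = Nat.choose n m := by
        rw [← Nat.choose_symm (by omega)]
        congr 1; omega
      have hpas : Nat.choose (n+1) m = Nat.choose n (m-1) + Nat.choose n m := by
        have := Nat.choose_succ_succ n (m-1)
        have hmm : m - 1 + 1 = m := by omega
        simp only [Nat.succ_eq_add_one, hmm] at this
        rw [this]
      have hpas2 : Nat.choose (n+1) (m+1) = Nat.choose n m + Nat.choose n (m+1) :=
        Nat.choose_succ_succ n m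
      have hanti : Nat.choose n (m+1) ≤ Nat.choose n m := choose_anti n m (by omega)
      rw [h1, hpas, hpas2, hsymm]
      omega
    · -- i ≥ 1
      set m := (n+1+i)/2 with hm
      have hpar : n + 1 + i = 2 * m := by omega
      have hD : D (n+1) (i:ℤ) = D n ((i:ℤ)-1) + D n ((i:ℤ)+1) := by
        simp [D, Int.ofNat_nonneg]
      have c1 : ((i:ℤ)-1) = ((i-1 : ℕ) : ℤ) := by omega
      have c2 : ((i:ℤ)+1) = ((i+1 : ℕ) : ℤ) := by push_cast; ring
      have h1 : D n ((i-1:ℕ):ℤ) = Nat.choose n ((n+(i-1))/2) - Nat.choose n ((n+(i-1))/2 + 1) :=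
        ih (i-1) (by omega)
      have h2 : D n ((i+1:ℕ):ℤ) = Nat.choose n ((n+(i+1))/2) - Nat.choose n ((n+(i+1))/2 + 1) :=
        ih (i+1) (by omega)
      have e1 : (n+(i-1))/2 = m - 1 := by omega
      have e2 : (n+(i+1))/2 = m := by omega
      have hm1 : 1 ≤ m := by omega
      have hpas : Nat.choose (n+1) m = Nat.choose n (m-1) + Nat.choose n m := by
        have := Nat.choose_succ_succ n (m-1)
        have hmm : m - 1 + 1 = m := by omega
        simp only [Nat.succ_eq_add_one, hmm] at this
        rw [this]
      have hpas2 : Nat.choose (n+1) (m+1) = Nat.choose n m + Nat.choose n (m+1) :=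
        Nat.choose_succ_succ n m
      have hanti1 : Nat.choose n m ≤ Nat.choose n (m-1) := by
        have := choose_anti n (m-1) (by omega)
        have hmm : m - 1 + 1 = m := by omega
        rwa [hmm] at this
      have hanti2 : Nat.choose n (m+1) ≤ Nat.choose n m := choose_anti n m (by omega)
      have hmm : m - 1 + 1 = m := by omega
      rw [hD, c1, c2, h1, h2, e1, e2, hmm, hpas, hpas2]
      omega


/-- 1D walk condition -/
def Cond (n : ℕ) (i : ℤ) (w : Fin (n+1) → ℤ) : Prop :=
  w 0 = 0 ∧ w (Fin.last n) = i ∧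
  (∀ k : Fin n, w k.succ - w k.castSucc = 1 ∨ w k.succ - w k.castSucc = -1) ∧
  (∀ k, 0 ≤ w k)

noncomputable def W1 (n : ℕ) (i : ℤ) : ℕ := Nat.card {w : Fin (n+1) → ℤ // Cond n i w}

instance condFinite (n : ℕ) (i : ℤ) : Finite {w : Fin (n+1) → ℤ // Cond n i w} := by
  have hfin : Finite {d : ℤ // d = 1 ∨ d = -1} := by
    have : ({1, -1} : Set ℤ).Finite := (Set.finite_singleton (-1)).insert 1
    have he : {d : ℤ | d = 1 ∨ d = -1} = ({1, -1} : Set ℤ) := by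
      ext d; simp [Set.mem_insert_iff]
    have := he ▸ this
    exact this.to_subtype
  apply Finite.of_injective
    (fun w => (fun k : Fin n => (⟨w.1 k.succ - w.1 k.castSucc, w.2.2.2.1 k⟩ :
      {d : ℤ // d = 1 ∨ d = -1})))
  intro w w' h
  apply Subtype.ext
  funext k
  induction k using Fin.induction with
  | zero => rw [w.2.1, w'.2.1]
  | succ k ih =>
    have := congrFun h k
    have h2 : w.1 k.succ - w.1 k.castSucc = w'.1 k.succ - w'.1 k.castSucc :=
      congrArg Subtype.val this
    omega

lemma cond_init {n : ℕ} {b : ℤ} (w : Fin (n+2) → ℤ) (h : Cond (n+1) b w)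
    (c : ℤ) (hc : w ((Fin.last n).castSucc) = c) : Cond n c (Fin.init w) := by
  obtain ⟨h0, hl, hs, hr⟩ := h
  refine ⟨?_, ?_, ?_, ?_⟩
  · have h00 : w ((0 : Fin (n+1)).castSucc) = Fin.init w 0 := rfl
    rw [← h00, Fin.castSucc_zero] at *
    exact h0
  · exact hc
  · intro k
    have := hs k.castSucc
    show w k.succ.castSucc - w k.castSucc.castSucc = 1 ∨
      w k.succ.castSucc - w k.castSucc.castSucc = -1
    rwa [← Fin.succ_castSucc]
  · intro k; exact hr k.castSucc

lemma cond_snoc {n : ℕ} (b c : ℤ) (hb : 0 ≤ b) (u : Fin (n+1) → ℤ) (h : Cond n c u)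
    (hc : c = b - 1 ∨ c = b + 1) : Cond (n+1) b (Fin.snoc u b) := by
  obtain ⟨h0, hl, hs, hr⟩ := h
  refine ⟨?_, ?_, ?_, ?_⟩
  · have h00 : (0 : Fin (n+2)) = (0 : Fin (n+1)).castSucc := by simp
    rw [h00, Fin.snoc_castSucc]
    exact h0
  · rw [Fin.snoc_last]
  · intro k
    induction k using Fin.lastCases with
    | last =>
      rw [Fin.succ_last, Fin.snoc_last, Fin.snoc_castSucc, hl]
      omega
    | cast j =>
      rw [Fin.succ_castSucc, Fin.snoc_castSucc, Fin.snoc_castSucc]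
      exact hs j
  · intro k
    induction k using Fin.lastCases with
    | last => rw [Fin.snoc_last]; exact hb
    | cast j => rw [Fin.snoc_castSucc]; exact hr j

noncomputable def recEquiv (n : ℕ) (b : ℤ) (hb : 0 ≤ b) :
    {w : Fin (n+2) → ℤ // Cond (n+1) b w} ≃
    ({u : Fin (n+1) → ℤ // Cond n (b-1) u} ⊕ {u : Fin (n+1) → ℤ // Cond n (b+1) u}) where
  toFun w :=
    if h : w.1 ((Fin.last n).castSucc) = b - 1 then
      Sum.inl ⟨Fin.init w.1, cond_init w.1 w.2 _ h⟩
    else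
      Sum.inr ⟨Fin.init w.1, cond_init w.1 w.2 _ (by
        have hstep := w.2.2.2.1 (Fin.last n)
        have hl : w.1 ((Fin.last n).succ) = b := w.2.2.1
        omega)⟩
  invFun p := p.elim
    (fun u => ⟨Fin.snoc u.1 b, cond_snoc b _ hb u.1 u.2 (Or.inl rfl)⟩)
    (fun u => ⟨Fin.snoc u.1 b, cond_snoc b _ hb u.1 u.2 (Or.inr rfl)⟩)
  left_inv w := by
    by_cases h : w.1 ((Fin.last n).castSucc) = b - 1 <;>
      simp only [h, dite_true, dite_false, dif_pos, dif_neg, not_false_iff, Sum.elim_inl,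
        Sum.elim_inr] <;>
    · apply Subtype.ext
      have hl := w.2.2.1
      calc Fin.snoc (Fin.init w.1) b = Fin.snoc (Fin.init w.1) (w.1 (Fin.last (n+1))) := by rw [hl]
        _ = w.1 := Fin.snoc_init_self w.1
  right_inv p := by
    rcases p with u | u
    · simp only [Sum.elim_inl]
      have hval : (Fin.snoc u.1 b : Fin (n+2) → ℤ) ((Fin.last n).castSucc) = b - 1 := by
        rw [Fin.snoc_castSucc]; exact u.2.2.1
      refine (dif_pos hval).trans ?_
      congr 1
      apply Subtype.ext
      exact Fin.init_snoc (α := fun _ : Fin (n+2) => ℤ) b u.1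
    · simp only [Sum.elim_inr]
      have hval : (Fin.snoc u.1 b : Fin (n+2) → ℤ) ((Fin.last n).castSucc) = b + 1 := by
        rw [Fin.snoc_castSucc]; exact u.2.2.1
      refine (dif_neg (show ¬ (Fin.snoc u.1 b : Fin (n+2) → ℤ) ((Fin.last n).castSucc) = b - 1 by rw [hval]; omega)).trans ?_
      congr 1
      apply Subtype.ext
      exact Fin.init_snoc (α := fun _ : Fin (n+2) => ℤ) b u.1

lemma W1_neg (n : ℕ) (b : ℤ) (h : b < 0) : W1 n b = 0 := by
  have : IsEmpty {w : Fin (n+1) → ℤ // Cond n b w} := by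
    constructor; rintro ⟨w, _, hl, _, hr⟩
    have := hr (Fin.last n); omega
  exact Nat.card_of_isEmpty

lemma W1_zero_eq (i : ℤ) : W1 0 i = if i = 0 then 1 else 0 := by
  split_ifs with h
  · subst h
    rw [W1, Nat.card_eq_one_iff_unique]
    constructor
    · constructor
      rintro ⟨w, h0, -, -, -⟩ ⟨w', h0', -, -, -⟩
      apply Subtype.ext; funext k
      have hk : k = 0 := by
        have := k.isLt
        exact Fin.ext (by omega)
      subst hk
      show w 0 = w' 0
      rw [h0, h0']
    · exact ⟨⟨fun _ => 0, rfl, rfl, fun k => k.elim0, fun _ => le_refl 0⟩⟩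
  · have : IsEmpty {w : Fin 1 → ℤ // Cond 0 i w} := by
      constructor; rintro ⟨w, h0, hl, _, _⟩
      exact h (h0 ▸ hl ▸ rfl)
    exact Nat.card_of_isEmpty

lemma W1_succ (n : ℕ) (b : ℤ) (hb : 0 ≤ b) :
    W1 (n+1) b = W1 n (b-1) + W1 n (b+1) := by
  rw [W1, Nat.card_congr (recEquiv n b hb), Nat.card_sum]; rfl


lemma W1_eq_D (n : ℕ) (i : ℤ) : W1 n i = D n i := by
  induction n generalizing i with
  | zero => rw [W1_zero_eq]; rfl
  | succ n ih =>
    by_cases h : 0 ≤ i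
    · rw [W1_succ n i h, ih, ih]; simp [D, h]
    · rw [W1_neg _ _ (by omega)]; simp [D, h]





lemma mem_diagSteps (p : ℤ × ℤ) :
    p ∈ diagSteps ↔ (p.1 = 1 ∨ p.1 = -1) ∧ (p.2 = 1 ∨ p.2 = -1) := by
  obtain ⟨a, b⟩ := p
  simp only [diagSteps, Set.mem_insert_iff, Set.mem_singleton_iff, Prod.mk.injEq]
  constructor
  · rintro (⟨h1, h2⟩ | ⟨h1, h2⟩ | ⟨h1, h2⟩ | ⟨h1, h2⟩) <;> subst h1 <;> subst h2 <;> simp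
  · rintro ⟨h1 | h1, h2 | h2⟩ <;> subst h1 <;> subst h2 <;> simp

noncomputable def prodEquiv (n : ℕ) (i j : ℤ) :
    {w : Fin (n+1) → ℤ × ℤ //
      w 0 = ((0 : ℤ), (0 : ℤ)) ∧ w (Fin.last n) = (i, j) ∧
      (∀ k : Fin n, w k.succ - w k.castSucc ∈ diagSteps) ∧
      (∀ k, w k ∈ quadQ)} ≃
    ({u : Fin (n+1) → ℤ // Cond n i u} × {v : Fin (n+1) → ℤ // Cond n j v}) where
  toFun w :=
    (⟨fun k => (w.1 k).1, by
      obtain ⟨h0, hl, hs, hr⟩ := w.2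
      refine ⟨?_, ?_, fun k => ?_, fun k => (hr k).1⟩
      · show (w.1 0).1 = 0; rw [h0]
      · show (w.1 (Fin.last n)).1 = i; rw [hl]
      · have := ((mem_diagSteps _).1 (hs k)).1
        show (w.1 k.succ).1 - (w.1 k.castSucc).1 = 1 ∨ (w.1 k.succ).1 - (w.1 k.castSucc).1 = -1
        simpa using this⟩,
    ⟨fun k => (w.1 k).2, by
      obtain ⟨h0, hl, hs, hr⟩ := w.2
      refine ⟨?_, ?_, fun k => ?_, fun k => (hr k).2⟩
      · show (w.1 0).2 = 0; rw [h0]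
      · show (w.1 (Fin.last n)).2 = j; rw [hl]
      · have := ((mem_diagSteps _).1 (hs k)).2
        show (w.1 k.succ).2 - (w.1 k.castSucc).2 = 1 ∨ (w.1 k.succ).2 - (w.1 k.castSucc).2 = -1
        simpa using this⟩)
  invFun p := ⟨fun k => (p.1.1 k, p.2.1 k), by
      obtain ⟨⟨u, h0, hl, hs, hr⟩, ⟨v, h0', hl', hs', hr'⟩⟩ := p
      refine ⟨?_, ?_, fun k => ?_, fun k => ⟨hr k, hr' k⟩⟩
      · show (u 0, v 0) = ((0 : ℤ), (0 : ℤ)); rw [h0, h0']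
      · show (u (Fin.last n), v (Fin.last n)) = (i, j); rw [hl, hl']
      · rw [mem_diagSteps]
        constructor
        · simpa using hs k
        · simpa using hs' k⟩
  left_inv w := rfl
  right_inv p := rfl

lemma walkCount_eq (n : ℕ) (i j : ℤ) :
    walkCount diagSteps quadQ (0, 0) (i, j) n = W1 n i * W1 n j := by
  rw [walkCount, Nat.card_congr (prodEquiv n i j), Nat.card_prod]; rfl


lemma key_formula (n k : ℕ) (hk : k % 2 = n % 2) :
    ((D n (k : ℤ) : ℚ)) =
      ((k : ℚ) + 1) / (((1 + (n + k) / 2 : ℕ) : ℚ)) * (Nat.choose n ((n + k) / 2) : ℚ) := by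
  set m := (n + k) / 2 with hm
  have h2m : n + k = 2 * m := by omega
  rw [D_closed n k hk]
  have hanti : Nat.choose n (m + 1) ≤ Nat.choose n m := choose_anti n m (by omega)
  rw [Nat.cast_sub hanti]
  have hm1 : ((1 + m : ℕ) : ℚ) = (m : ℚ) + 1 := by push_cast; ring
  rw [hm1]
  have hne : (m : ℚ) + 1 ≠ 0 := by positivity
  by_cases hkn : k ≤ n
  · have hnm : m ≤ n := by omega
    have hrec : (Nat.choose n (m + 1) : ℚ) * ((m : ℚ) + 1)
        = (Nat.choose n m : ℚ) * ((n : ℚ) - (m : ℚ)) := by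
      have := Nat.choose_succ_right_eq n m
      have hcast : (Nat.choose n (m + 1) : ℚ) * ((m : ℚ) + 1)
          = (Nat.choose n m : ℚ) * ((n - m : ℕ) : ℚ) := by exact_mod_cast this
      rw [hcast, Nat.cast_sub hnm]
    rw [div_mul_eq_mul_div, eq_div_iff hne, sub_mul, hrec]
    have hnk : (n : ℚ) = 2 * (m : ℚ) - (k : ℚ) := by
      have : ((n + k : ℕ) : ℚ) = ((2 * m : ℕ) : ℚ) := by rw [h2m]
      push_cast at this
      linarith
    rw [hnk]; ring
  · have hmn : n < m := by omega
    rw [Nat.choose_eq_zero_of_lt hmn, Nat.choose_eq_zero_of_lt (by omega)]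
    simp

theorem diag_quadrant_count (i j n : ℕ) (hi : i % 2 = n % 2) (hj : j % 2 = n % 2) :
    (walkCount diagSteps quadQ (0, 0) ((i : ℤ), (j : ℤ)) n : ℚ) =
      ((i + 1) * (j + 1) : ℚ) /
          (((1 + (n + i) / 2 : ℕ) : ℚ) * ((1 + (n + j) / 2 : ℕ) : ℚ)) *
        (Nat.choose n ((n + i) / 2) : ℚ) * (Nat.choose n ((n + j) / 2) : ℚ) := by
  rw [walkCount_eq n (i : ℤ) (j : ℤ), Nat.cast_mul, W1_eq_D, W1_eq_D,
    key_formula n i hi, key_formula n j hj]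
  have h1 : ((1 + (n + i) / 2 : ℕ) : ℚ) ≠ 0 := by positivity
  have h2 : ((1 + (n + j) / 2 : ℕ) : ℚ) ≠ 0 := by positivity
  field_simp
end

section
/- Let c_{i,j}(n) denote the number of square-lattice walks of length n from (−1,0) to (i,j) confined to the three-quadrant cone C, and let g_{k,ℓ}(n) denote the number of square-lattice walks of length n from (0,0) to (k,ℓ) confined to the Gessel cone G = {(k,ℓ) ∈ ℤ² : k + ℓ ≥ 0 and ℓ ≥ 0}. Then for all integers i, j with j ≥ 0 and i < j, and all n ≥ 0: c_{i,j}(n) − c_{j,i}(n) = g_{−i−1,j}(n). -/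
/-- The Gessel cone `G = {(i,j) : i + j ≥ 0 and j ≥ 0}`. -/
def coneG : Set (ℤ × ℤ) := {p | 0 ≤ p.1 + p.2 ∧ 0 ≤ p.2}

/-! ### Auxiliary material -/

/-- Swap the two coordinates. -/
def swapP (p : ℤ × ℤ) : ℤ × ℤ := (p.2, p.1)

/-- The affine reflection `(x,y) ↦ (-x-1, y)`. -/
def phiP (p : ℤ × ℤ) : ℤ × ℤ := (-p.1 - 1, p.2)

lemma swapP_swapP (p : ℤ × ℤ) : swapP (swapP p) = p := rfl

lemma swapP_sub (p q : ℤ × ℤ) : swapP (p - q) = swapP p - swapP q := rfl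

lemma swapP_of_diag {p : ℤ × ℤ} (h : p.1 = p.2) : swapP p = p := by
  obtain ⟨a, b⟩ := p; simp_all [swapP]

lemma phiP_phiP (p : ℤ × ℤ) : phiP (phiP p) = p := by
  obtain ⟨a, b⟩ := p; simp [phiP]

lemma mem_squareSteps {s : ℤ × ℤ} :
    s ∈ squareSteps ↔ s = (1,0) ∨ s = (-1,0) ∨ s = (0,1) ∨ s = (0,-1) := by
  simp [squareSteps]

lemma swap_step {s : ℤ × ℤ} (h : s ∈ squareSteps) : swapP s ∈ squareSteps := by
  rcases mem_squareSteps.1 h with h | h | h | h <;> subst h <;>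
    simp [swapP, mem_squareSteps]

lemma neg1_step {s : ℤ × ℤ} (h : s ∈ squareSteps) : (-s.1, s.2) ∈ squareSteps := by
  rcases mem_squareSteps.1 h with h | h | h | h <;> subst h <;>
    simp [mem_squareSteps]

lemma step_diff {s : ℤ × ℤ} (h : s ∈ squareSteps) : s.1 - s.2 = 1 ∨ s.1 - s.2 = -1 := by
  rcases mem_squareSteps.1 h with h | h | h | h <;> subst h <;> norm_num

/-- Discrete intermediate-value type result: if the increments are `±1` and the
value is never `0`, then a value starting negative stays negative. -/
lemma stays_neg {n : ℕ} (f : Fin (n+1) → ℤ) (h0 : f 0 < 0)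
    (hstep : ∀ k : Fin n, f k.succ - f k.castSucc = 1 ∨ f k.succ - f k.castSucc = -1)
    (hnz : ∀ k, f k ≠ 0) : ∀ k, f k < 0 := by
  have key : ∀ m : ℕ, ∀ hm : m < n+1, f ⟨m, hm⟩ < 0 := by
    intro m
    induction m with
    | zero =>
      intro hm
      have : (⟨0, hm⟩ : Fin (n+1)) = 0 := rfl
      rw [this]; exact h0
    | succ m ih =>
      intro hm
      have hmn : m < n := by omega
      have h1 := hstep ⟨m, hmn⟩
      have h2 := ih (by omega)
      have h3 := hnz ⟨m+1, hm⟩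
      have hsucc : (Fin.succ ⟨m, hmn⟩ : Fin (n+1)) = ⟨m+1, hm⟩ := rfl
      have hcast : (Fin.castSucc ⟨m, hmn⟩ : Fin (n+1)) = ⟨m, by omega⟩ := rfl
      rw [hsucc, hcast] at h1
      omega
  intro k
  have := key k.val k.isLt
  simpa using this

/-- Walk predicate matching `walkCount` with square steps. -/
def WalkP (n : ℕ) (region : Set (ℤ × ℤ)) (a b : ℤ × ℤ) (w : Fin (n+1) → ℤ × ℤ) : Prop :=
  w 0 = a ∧ w (Fin.last n) = b ∧
    (∀ k : Fin n, w k.succ - w k.castSucc ∈ squareSteps) ∧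
    (∀ k, w k ∈ region)

lemma walkCount_eq_s14 (n : ℕ) (region : Set (ℤ × ℤ)) (a b : ℤ × ℤ) :
    walkCount squareSteps region a b n = Nat.card {w // WalkP n region a b w} := rfl

/-- The diag-difference along steps is `±1`. -/
lemma diag_step {n : ℕ} {w : Fin (n+1) → ℤ × ℤ}
    (hs : ∀ k : Fin n, w k.succ - w k.castSucc ∈ squareSteps) (k : Fin n) :
    ((w k.succ).1 - (w k.succ).2) - ((w k.castSucc).1 - (w k.castSucc).2) = 1 ∨
    ((w k.succ).1 - (w k.succ).2) - ((w k.castSucc).1 - (w k.castSucc).2) = -1 := by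
  have h := step_diff (hs k)
  rw [Prod.fst_sub, Prod.snd_sub] at h
  omega

def Touch {n : ℕ} (w : Fin (n+1) → ℤ × ℤ) : Prop := ∃ k, (w k).1 = (w k).2

/-- Walks whose diag-difference changes sign must touch the diagonal. -/
lemma touches {n : ℕ} (w : Fin (n+1) → ℤ × ℤ) (h0 : (w 0).1 - (w 0).2 < 0)
    (hl : 0 < (w (Fin.last n)).1 - (w (Fin.last n)).2)
    (hs : ∀ k : Fin n, w k.succ - w k.castSucc ∈ squareSteps) : Touch w := by
  by_contra hc
  unfold Touch at hc
  push_neg at hc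
  have := stays_neg (fun k => (w k).1 - (w k).2) h0 (diag_step hs)
    (fun k => sub_ne_zero.2 (hc k)) (Fin.last n)
  omega

/-! ### Finiteness -/

lemma squareSteps_finite : squareSteps.Finite := by
  unfold squareSteps
  exact ((((Set.finite_singleton _).insert _).insert _).insert _)

instance walks_finite {n : ℕ} (a : ℤ × ℤ) :
    Finite {w : Fin (n+1) → ℤ × ℤ //
      w 0 = a ∧ ∀ k : Fin n, w k.succ - w k.castSucc ∈ squareSteps} := by
  haveI := squareSteps_finite.to_subtype
  apply Finite.of_injective
    (fun w => (fun k : Fin n => (⟨w.1 k.succ - w.1 k.castSucc, w.2.2 k⟩ : squareSteps)))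
  intro w w' h
  apply Subtype.ext
  have key : ∀ m : ℕ, ∀ hm : m < n+1, w.1 ⟨m, hm⟩ = w'.1 ⟨m, hm⟩ := by
    intro m
    induction m with
    | zero =>
      intro hm
      have h0 : (⟨0, hm⟩ : Fin (n+1)) = 0 := rfl
      rw [h0, w.2.1, w'.2.1]
    | succ m ih =>
      intro hm
      have hmn : m < n := by omega
      have h1 := congrFun h ⟨m, hmn⟩
      simp only [Subtype.mk.injEq] at h1
      have hsucc : (Fin.succ ⟨m, hmn⟩ : Fin (n+1)) = ⟨m+1, hm⟩ := rfl
      have hcast : (Fin.castSucc ⟨m, hmn⟩ : Fin (n+1)) = ⟨m, by omega⟩ := rfl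
      rw [hsucc, hcast] at h1
      have h2 := ih (by omega)
      calc w.1 ⟨m+1, hm⟩ = (w.1 ⟨m+1, hm⟩ - w.1 ⟨m, by omega⟩) + w.1 ⟨m, by omega⟩ := by ring
        _ = (w'.1 ⟨m+1, hm⟩ - w'.1 ⟨m, by omega⟩) + w'.1 ⟨m, by omega⟩ := by rw [h1, h2]
        _ = w'.1 ⟨m+1, hm⟩ := by ring
  funext m
  have := key m.val m.isLt
  simpa using this

instance walkP_finite {n : ℕ} (region : Set (ℤ × ℤ)) (a b : ℤ × ℤ) :
    Finite {w // WalkP n region a b w} := by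
  apply Finite.of_injective (α := {w // WalkP n region a b w})
    (fun w => (⟨w.1, w.2.1, w.2.2.2.1⟩ : {w : Fin (n+1) → ℤ × ℤ //
      w 0 = a ∧ ∀ k : Fin n, w k.succ - w k.castSucc ∈ squareSteps}))
  intro w w' h
  apply Subtype.ext
  simpa using h

lemma card_split {α : Type*} (p q : α → Prop) [Finite {x // p x}] :
    Nat.card {x // p x} = Nat.card {x // p x ∧ q x} + Nat.card {x // p x ∧ ¬ q x} := by
  classical
  calc Nat.card {x // p x}
      = Nat.card ({y : {x // p x} // q y.1} ⊕ {y : {x // p x} // ¬ q y.1}) :=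
        (Nat.card_congr (Equiv.sumCompl _)).symm
    _ = Nat.card {y : {x // p x} // q y.1} + Nat.card {y : {x // p x} // ¬ q y.1} :=
        Nat.card_sum
    _ = Nat.card {x // p x ∧ q x} + Nat.card {x // p x ∧ ¬ q x} := by
        rw [Nat.card_congr (Equiv.subtypeSubtypeEquivSubtypeInter p q),
          Nat.card_congr (Equiv.subtypeSubtypeEquivSubtypeInter p (fun x => ¬ q x))]

/-! ### The reflection involution -/

def Tset {n : ℕ} (w : Fin (n+1) → ℤ × ℤ) : Finset (Fin (n+1)) :=
  Finset.univ.filter (fun k => (w k).1 = (w k).2)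

lemma mem_Tset {n : ℕ} {w : Fin (n+1) → ℤ × ℤ} {k : Fin (n+1)} :
    k ∈ Tset w ↔ (w k).1 = (w k).2 := by simp [Tset]

noncomputable def k0 {n : ℕ} (w : Fin (n+1) → ℤ × ℤ) : Fin (n+1) :=
  if h : (Tset w).Nonempty then (Tset w).max' h else ⟨0, n.succ_pos⟩

lemma k0_congr {n : ℕ} {w w' : Fin (n+1) → ℤ × ℤ} (h : Tset w = Tset w') :
    k0 w = k0 w' := by
  unfold k0
  rw [h]

lemma k0_mem {n : ℕ} {w : Fin (n+1) → ℤ × ℤ} (h : (Tset w).Nonempty) :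
    k0 w ∈ Tset w := by
  unfold k0; rw [dif_pos h]; exact Finset.max'_mem _ h

lemma le_k0 {n : ℕ} {w : Fin (n+1) → ℤ × ℤ} {k : Fin (n+1)} (h : k ∈ Tset w) :
    k ≤ k0 w := by
  unfold k0; rw [dif_pos ⟨k, h⟩]; exact Finset.le_max' _ _ h

noncomputable def Rw {n : ℕ} (w : Fin (n+1) → ℤ × ℤ) : Fin (n+1) → ℤ × ℤ :=
  fun m => if m ≤ k0 w then w m else swapP (w m)

lemma Tset_Rw {n : ℕ} (w : Fin (n+1) → ℤ × ℤ) : Tset (Rw w) = Tset w := by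
  ext k
  simp only [mem_Tset, Rw]
  split
  · rfl
  · constructor
    · intro h; exact h.symm
    · intro h; exact h.symm

lemma Rw_Rw {n : ℕ} (w : Fin (n+1) → ℤ × ℤ) : Rw (Rw w) = w := by
  funext m
  have h : k0 (Rw w) = k0 w := k0_congr (Tset_Rw w)
  by_cases hm : m ≤ k0 w
  · have h1 : Rw w m = w m := if_pos hm
    have h2 : Rw (Rw w) m = Rw w m := if_pos (by rw [h]; exact hm)
    rw [h2, h1]
  · have h1 : Rw w m = swapP (w m) := if_neg hm
    have h2 : Rw (Rw w) m = swapP (Rw w m) := if_neg (by rw [h]; exact hm)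
    rw [h2, h1, swapP_swapP]

lemma Rw_walk {n : ℕ} {b : ℤ × ℤ} (hb : b.1 ≠ b.2) {w : Fin (n+1) → ℤ × ℤ}
    (hw : WalkP n coneC (-1, 0) b w) (ht : Touch w) :
    WalkP n coneC (-1, 0) (swapP b) (Rw w) ∧ Touch (Rw w) := by
  obtain ⟨h0, hl, hs, hr⟩ := hw
  obtain ⟨kt, hkt⟩ := ht
  have hne : (Tset w).Nonempty := ⟨kt, mem_Tset.2 hkt⟩
  have hlast : ¬ (Fin.last n ≤ k0 w) := by
    intro hle
    have : k0 w = Fin.last n := le_antisymm (Fin.le_last _) hle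
    have hmem := k0_mem hne
    rw [this, mem_Tset, hl] at hmem
    exact hb hmem
  refine ⟨⟨?_, ?_, ?_, ?_⟩, ?_⟩
  · have : (0 : Fin (n+1)) ≤ k0 w := Fin.zero_le _
    show (if (0 : Fin (n+1)) ≤ k0 w then w 0 else swapP (w 0)) = (-1, 0)
    rw [if_pos this, h0]
  · show (if Fin.last n ≤ k0 w then w (Fin.last n) else swapP (w (Fin.last n))) = swapP b
    rw [if_neg hlast, hl]
  · intro k
    by_cases hsucc : k.succ ≤ k0 w
    · have hcast : k.castSucc ≤ k0 w := le_trans (le_of_lt (Fin.castSucc_lt_succ (i := k))) hsucc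
      show (if k.succ ≤ k0 w then w k.succ else swapP (w k.succ)) -
        (if k.castSucc ≤ k0 w then w k.castSucc else swapP (w k.castSucc)) ∈ squareSteps
      rw [if_pos hsucc, if_pos hcast]
      exact hs k
    · by_cases hcast : k.castSucc ≤ k0 w
      · have hk0 : k0 w = k.castSucc := by
          apply Fin.ext
          have a1 : (k.castSucc : Fin (n+1)).val ≤ (k0 w).val := hcast
          have a2 : ¬ ((k.succ : Fin (n+1)).val ≤ (k0 w).val) := hsucc
          have b1 : (k.castSucc : Fin (n+1)).val = k.val := rfl
          have b2 : (k.succ : Fin (n+1)).val = k.val + 1 := rfl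
          omega
        have hdiag : (w k.castSucc).1 = (w k.castSucc).2 := by
          have := k0_mem hne
          rw [hk0, mem_Tset] at this
          exact this
        show (if k.succ ≤ k0 w then w k.succ else swapP (w k.succ)) -
          (if k.castSucc ≤ k0 w then w k.castSucc else swapP (w k.castSucc)) ∈ squareSteps
        rw [if_neg hsucc, if_pos hcast, ← swapP_of_diag hdiag, ← swapP_sub]
        exact swap_step (hs k)
      · show (if k.succ ≤ k0 w then w k.succ else swapP (w k.succ)) -
          (if k.castSucc ≤ k0 w then w k.castSucc else swapP (w k.castSucc)) ∈ squareSteps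
        rw [if_neg hsucc, if_neg hcast, ← swapP_sub]
        exact swap_step (hs k)
  · intro m
    show (if m ≤ k0 w then w m else swapP (w m)) ∈ coneC
    split
    · exact hr m
    · have := hr m
      unfold coneC at this ⊢
      simp only [Set.mem_setOf_eq, swapP] at this ⊢
      tauto
  · refine ⟨kt, ?_⟩
    have hk : kt ≤ k0 w := le_k0 (mem_Tset.2 hkt)
    show (if kt ≤ k0 w then w kt else swapP (w kt)).1 =
      (if kt ≤ k0 w then w kt else swapP (w kt)).2
    rw [if_pos hk]
    exact hkt

/-! ### Main theorem -/

theorem square_reflection_to_gessel (i j : ℤ) (hj : 0 ≤ j) (hij : i < j) (n : ℕ) :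
    (walkCount squareSteps coneC (-1, 0) (i, j) n : ℤ) -
        (walkCount squareSteps coneC (-1, 0) (j, i) n : ℤ) =
      (walkCount squareSteps coneG (0, 0) (-i - 1, j) n : ℤ) := by
  classical
  have hij' : i ≠ j := ne_of_lt hij
  -- Step 1: split
  have hsplit : walkCount squareSteps coneC (-1, 0) (i, j) n =
      Nat.card {w // WalkP n coneC (-1,0) (i,j) w ∧ Touch w} +
      Nat.card {w // WalkP n coneC (-1,0) (i,j) w ∧ ¬ Touch w} := by
    rw [walkCount_eq_s14]
    exact card_split _ _
  -- Step 2: touching walks to (i,j) ≃ all walks to (j,i)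
  have e2 : {w // WalkP n coneC (-1,0) (j,i) w ∧ Touch w} ≃
      {w // WalkP n coneC (-1,0) (i,j) w ∧ Touch w} :=
    { toFun := fun w => ⟨Rw w.1, Rw_walk (by simp; omega) w.2.1 w.2.2⟩
      invFun := fun w => ⟨Rw w.1, Rw_walk (by simp; omega) w.2.1 w.2.2⟩
      left_inv := fun w => Subtype.ext (Rw_Rw w.1)
      right_inv := fun w => Subtype.ext (Rw_Rw w.1) }
  have e3 : {w // WalkP n coneC (-1,0) (j,i) w ∧ Touch w} ≃
      {w // WalkP n coneC (-1,0) (j,i) w} :=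
    Equiv.subtypeEquivRight (fun w => by
      constructor
      · exact fun h => h.1
      · intro hw
        refine ⟨hw, touches w ?_ ?_ hw.2.2.1⟩
        · rw [hw.1]; norm_num
        · rw [hw.2.1]; simp; omega)
  have htc : walkCount squareSteps coneC (-1, 0) (j, i) n =
      Nat.card {w // WalkP n coneC (-1,0) (i,j) w ∧ Touch w} := by
    rw [walkCount_eq_s14]
    rw [← Nat.card_congr e3, Nat.card_congr e2]
  -- Step 3: non-touching walks ≃ Gessel walks
  have e4 : {w // WalkP n coneC (-1,0) (i,j) w ∧ ¬ Touch w} ≃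
      {w // WalkP n coneG (0,0) (-i-1,j) w} :=
    { toFun := fun w => ⟨fun m => phiP (w.1 m), by
        obtain ⟨⟨h0, hl, hs, hr⟩, ht⟩ := w.2
        unfold Touch at ht
        push_neg at ht
        have hneg : ∀ k, (w.1 k).1 - (w.1 k).2 < 0 := by
          apply stays_neg _ (by rw [h0]; norm_num) (diag_step hs)
            (fun k => sub_ne_zero.2 (ht k))
        refine ⟨?_, ?_, ?_, ?_⟩
        · show phiP (w.1 0) = (0, 0)
          rw [h0]; simp [phiP]
        · show phiP (w.1 (Fin.last n)) = (-i - 1, j)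
          rw [hl]; simp [phiP]
        · intro k
          show phiP (w.1 k.succ) - phiP (w.1 k.castSucc) ∈ squareSteps
          have hd : phiP (w.1 k.succ) - phiP (w.1 k.castSucc) =
              (-(w.1 k.succ - w.1 k.castSucc).1, (w.1 k.succ - w.1 k.castSucc).2) := by
            simp [phiP, Prod.ext_iff]; ring
          rw [hd]
          exact neg1_step (hs k)
        · intro k
          have h1 := hr k
          have h2 := hneg k
          unfold coneC at h1
          simp only [Set.mem_setOf_eq] at h1
          show phiP (w.1 k) ∈ coneG
          unfold coneG phiP
          simp only [Set.mem_setOf_eq]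
          omega⟩
      invFun := fun w => ⟨fun m => phiP (w.1 m), by
        obtain ⟨h0, hl, hs, hr⟩ := w.2
        constructor
        · refine ⟨?_, ?_, ?_, ?_⟩
          · show phiP (w.1 0) = (-1, 0)
            rw [h0]; simp [phiP]
          · show phiP (w.1 (Fin.last n)) = (i, j)
            rw [hl]; simp [phiP, Prod.ext_iff]
          · intro k
            show phiP (w.1 k.succ) - phiP (w.1 k.castSucc) ∈ squareSteps
            have hd : phiP (w.1 k.succ) - phiP (w.1 k.castSucc) =
                (-(w.1 k.succ - w.1 k.castSucc).1, (w.1 k.succ - w.1 k.castSucc).2) := by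
              simp [phiP, Prod.ext_iff]; ring
            rw [hd]
            exact neg1_step (hs k)
          · intro k
            have h1 := hr k
            unfold coneG at h1
            simp only [Set.mem_setOf_eq] at h1
            show phiP (w.1 k) ∈ coneC
            unfold coneC phiP
            simp only [Set.mem_setOf_eq]
            omega
        · rintro ⟨k, hk⟩
          simp only at hk
          have h1 := hr k
          unfold coneG at h1
          simp only [Set.mem_setOf_eq] at h1
          unfold phiP at hk
          simp only at hk
          omega⟩
      left_inv := fun w => Subtype.ext (funext fun m => phiP_phiP _)
      right_inv := fun w => Subtype.ext (funext fun m => phiP_phiP _) }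
  have hg : walkCount squareSteps coneG (0, 0) (-i - 1, j) n =
      Nat.card {w // WalkP n coneC (-1,0) (i,j) w ∧ ¬ Touch w} := by
    rw [walkCount_eq_s14]
    exact (Nat.card_congr e4).symm
  rw [hsplit, htc, hg]
  push_cast
  ring
end
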